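/- Let R be a nonempty finite type, d ≥ 1, and ρ : Matrix (R × Fin d) (R × Fin d) ℂ. Then ∫ U, (1_R ⊗ U) · ρ · (1_R ⊗ U)ᴴ dμ_d = ρ_R ⊗ ((1/d) • 1), where 1_R ⊗ U is the Kronecker product of the identity on R with U, ρ_R is the partial trace of ρ over Fin d, and the right-hand side is the Kronecker product of ρ_R with the maximally mixed state (1/d) • 1 on Fin d. -/

import Mathlib

open MeasureTheory Matrix
open scoped Kronecker

noncomputable section

attribute [local instance] Matrix.normedAddCommGroup Matrix.normedSpace

local instance {d : ℕ} : MeasurableSpace (Matrix.unitaryGroup (Fin d) ℂ) := borel _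
local instance {d : ℕ} : BorelSpace (Matrix.unitaryGroup (Fin d) ℂ) := ⟨rfl⟩
local instance {n m : Type*} [Fintype n] [Fintype m] : ContinuousENorm (Matrix n m ℂ) :=
  SeminormedAddGroup.toContinuousENorm

section Aux

private def entryCLM {n m : Type*} [Fintype n] [Fintype m] (i : n) (j : m) :
    Matrix n m ℂ →L[ℂ] ℂ :=
  LinearMap.toContinuousLinearMap
    { toFun := fun M => M i j
      map_add' := fun _ _ => rfl
      map_smul' := fun _ _ => rfl }

private lemma integral_entry {X : Type*} [MeasurableSpace X] {μ : Measure X}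
    {n m : Type*} [Fintype n] [Fintype m] {f : X → Matrix n m ℂ}
    (hf : Integrable f μ) (i : n) (j : m) :
    (∫ x, f x ∂μ) i j = ∫ x, f x i j ∂μ :=
  ((entryCLM i j).integral_comp_comm hf).symm

private def traceCLM (n : Type*) [Fintype n] : Matrix n n ℂ →L[ℂ] ℂ :=
  LinearMap.toContinuousLinearMap (Matrix.traceLinearMap n ℂ ℂ)

set_option maxHeartbeats 1000000 in
private lemma unitary_compact {d : ℕ} : CompactSpace (Matrix.unitaryGroup (Fin d) ℂ) := by
  haveI hproper : ProperSpace (Matrix (Fin d) (Fin d) ℂ) := FiniteDimensional.proper ℂ _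
  have hcl : IsClosed (Matrix.unitaryGroup (Fin d) ℂ : Set (Matrix (Fin d) (Fin d) ℂ)) := by
    have heq : (Matrix.unitaryGroup (Fin d) ℂ : Set (Matrix (Fin d) (Fin d) ℂ)) =
        {A | star A * A = 1} ∩ {A | A * star A = 1} :=
      Set.ext fun A => Unitary.mem_iff
    rw [heq]
    exact (isClosed_eq (continuous_star.matrix_mul continuous_id) continuous_const).inter
      (isClosed_eq (continuous_id.matrix_mul continuous_star) continuous_const)
  have hbdd : Bornology.IsBounded
      (Matrix.unitaryGroup (Fin d) ℂ : Set (Matrix (Fin d) (Fin d) ℂ)) := by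
    apply Bornology.IsBounded.subset
      (Metric.isBounded_closedBall (x := (0 : Matrix (Fin d) (Fin d) ℂ)) (r := 1))
    intro U hU
    simpa [Metric.mem_closedBall] using entrywise_sup_norm_bound_of_unitary hU
  exact isCompact_iff_compactSpace.mp (Metric.isCompact_of_isClosed_isBounded hcl hbdd)

attribute [local instance] unitary_compact

private lemma integrable_cont {d : ℕ} {E : Type*} [NormedAddCommGroup E]
    {μ : Measure (Matrix.unitaryGroup (Fin d) ℂ)} [IsProbabilityMeasure μ]
    {f : Matrix.unitaryGroup (Fin d) ℂ → E} (hf : Continuous f) :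
    Integrable f μ :=
  hf.integrable_of_hasCompactSupport
    (IsCompact.of_isClosed_subset isCompact_univ (isClosed_tsupport f) (Set.subset_univ _))

private lemma eq_smul_one_of_commutes {d : ℕ} (M : Matrix (Fin d) (Fin d) ℂ)
    (h : ∀ V : Matrix.unitaryGroup (Fin d) ℂ,
      (V : Matrix (Fin d) (Fin d) ℂ) * M = M * (V : Matrix (Fin d) (Fin d) ℂ)) :
    M = (M.trace / d) • 1 := by
  have hoff : ∀ i j : Fin d, i ≠ j → M i j = 0 := by
    intro i j hij
    set v : Fin d → ℂ := fun k => if k = i then (-1 : ℂ) else 1 with hv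
    have hvv : (fun k => v k * star (v k)) = fun _ => (1 : ℂ) := by
      funext k
      by_cases hk : k = i <;> simp [hv, hk]
    have hD : Matrix.diagonal v ∈ Matrix.unitaryGroup (Fin d) ℂ := by
      rw [Matrix.mem_unitaryGroup_iff, Matrix.star_eq_conjTranspose,
        Matrix.diagonal_conjTranspose, Matrix.diagonal_mul_diagonal]
      show Matrix.diagonal (fun k => v k * star (v k)) = 1
      rw [hvv, Matrix.diagonal_one]
    have hkey := congrFun (congrFun (h ⟨_, hD⟩) i) j
    simp only [Matrix.diagonal_mul, Matrix.mul_diagonal] at hkey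
    have hvi : v i = -1 := by simp [hv]
    have hvj : v j = 1 := by simp [hv, Ne.symm hij]
    rw [hvi, hvj] at hkey
    have h2 : (2 : ℂ) * M i j = 0 := by linear_combination -hkey
    simpa using h2
  have hdiag : ∀ i j : Fin d, M i i = M j j := by
    intro i j
    set σ := Equiv.swap i j with hσ
    set S : Matrix (Fin d) (Fin d) ℂ := Matrix.of fun a b => if b = σ a then 1 else 0 with hS
    have hSU : S ∈ Matrix.unitaryGroup (Fin d) ℂ := by
      rw [Matrix.mem_unitaryGroup_iff]
      ext a b
      simp only [Matrix.mul_apply, Matrix.star_eq_conjTranspose, Matrix.conjTranspose_apply, hS,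
        Matrix.of_apply, apply_ite (starRingEnd ℂ), _root_.map_one, map_zero, ite_mul, one_mul, zero_mul]
      simp [Finset.sum_ite_eq', Matrix.one_apply, σ.injective.eq_iff]
    have key := congrFun (congrFun (h ⟨_, hSU⟩) i) j
    simp only [Matrix.mul_apply, hS, Matrix.of_apply, ite_mul, mul_ite, one_mul, mul_one,
      zero_mul, mul_zero] at key
    have hσσ : ∀ a, σ (σ a) = a := fun a => Equiv.swap_apply_self i j a
    have hrw : ∀ c : Fin d, (j = σ c) = (c = σ j) := fun c =>
      eq_iff_iff.mpr ⟨fun hc => by rw [hc, hσσ], fun hc => by rw [hc, hσσ]⟩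
    simp only [hrw] at key
    simp only [Finset.sum_ite_eq, Finset.sum_ite_eq', Finset.mem_univ, if_true] at key
    rw [hσ] at key
    simp only [Equiv.swap_apply_left, Equiv.swap_apply_right] at key
    exact key.symm
  ext i j
  by_cases hij : i = j
  · subst hij
    have hd : (d : ℂ) ≠ 0 := Nat.cast_ne_zero.mpr (i.pos).ne'
    have htr : M.trace = (d : ℂ) * M i i := by
      have hsum : ∑ k : Fin d, M.diag k = ∑ _k : Fin d, M i i :=
        Finset.sum_congr rfl fun k _ => hdiag k i
      rw [Matrix.trace, hsum, Finset.sum_const, Finset.card_univ, Fintype.card_fin,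
        nsmul_eq_mul]
    rw [Matrix.smul_apply, Matrix.one_apply_eq, smul_eq_mul, mul_one, htr, mul_comm,
      mul_div_assoc, div_self hd, mul_one]
  · simp [Matrix.smul_apply, Matrix.one_apply, hij, hoff i j hij]

private lemma trace_conj_eq {d : ℕ} (A B : Matrix (Fin d) (Fin d) ℂ)
    (h : star A * A = 1) : (A * B * star A).trace = B.trace := by
  rw [Matrix.trace_mul_cycle, h, one_mul]

private lemma continuous_coe {d : ℕ} :
    Continuous fun U : Matrix.unitaryGroup (Fin d) ℂ => (U : Matrix (Fin d) (Fin d) ℂ) :=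
  continuous_subtype_val

set_option maxHeartbeats 1000000 in
private lemma integral_conj_unitary {d : ℕ}
    (μ : Measure (Matrix.unitaryGroup (Fin d) ℂ))
    [μ.IsHaarMeasure] [IsProbabilityMeasure μ]
    (B : Matrix (Fin d) (Fin d) ℂ) :
    ∫ U : Matrix.unitaryGroup (Fin d) ℂ,
        (U : Matrix (Fin d) (Fin d) ℂ) * B * star (U : Matrix (Fin d) (Fin d) ℂ) ∂μ
      = (B.trace / d) • 1 := by
  set f : Matrix.unitaryGroup (Fin d) ℂ → Matrix (Fin d) (Fin d) ℂ :=
    fun U => (U : Matrix (Fin d) (Fin d) ℂ) * B * star (U : Matrix (Fin d) (Fin d) ℂ) with hf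
  have hcont : Continuous f := by
    apply Continuous.matrix_mul
    · exact continuous_coe.matrix_mul continuous_const
    · exact continuous_star.comp continuous_coe
  have hint : Integrable f μ := integrable_cont hcont
  set F := ∫ U, f U ∂μ with hF
  have hcomm : ∀ V : Matrix.unitaryGroup (Fin d) ℂ,
      (V : Matrix (Fin d) (Fin d) ℂ) * F = F * (V : Matrix (Fin d) (Fin d) ℂ) := by
    intro V
    set L : Matrix (Fin d) (Fin d) ℂ →L[ℂ] Matrix (Fin d) (Fin d) ℂ :=
      LinearMap.toContinuousLinearMap
        { toFun := fun X =>
            (V : Matrix (Fin d) (Fin d) ℂ) * X * star (V : Matrix (Fin d) (Fin d) ℂ)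
          map_add' := fun X Y => by
            show (V : Matrix (Fin d) (Fin d) ℂ) * (X + Y) * star (V : Matrix (Fin d) (Fin d) ℂ)
              = (V : Matrix (Fin d) (Fin d) ℂ) * X * star (V : Matrix (Fin d) (Fin d) ℂ) + (V : Matrix (Fin d) (Fin d) ℂ) * Y * star (V : Matrix (Fin d) (Fin d) ℂ)
            rw [mul_add, add_mul]
          map_smul' := fun c X => by
            simp only [RingHom.id_apply, Matrix.mul_smul, Matrix.smul_mul] } with hL
    have h1 : (V : Matrix (Fin d) (Fin d) ℂ) * F * star (V : Matrix (Fin d) (Fin d) ℂ) = F := by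
      have hc := L.integral_comp_comm hint
      have hLf : ∀ U : Matrix.unitaryGroup (Fin d) ℂ, L (f U) = f (V * U) := by
        intro U
        show (V : Matrix (Fin d) (Fin d) ℂ) * ((U : Matrix (Fin d) (Fin d) ℂ) * B * star (U : Matrix (Fin d) (Fin d) ℂ)) * star (V : Matrix (Fin d) (Fin d) ℂ)
          = ((V * U : Matrix.unitaryGroup (Fin d) ℂ) : Matrix (Fin d) (Fin d) ℂ) * B * star ((V * U : Matrix.unitaryGroup (Fin d) ℂ) : Matrix (Fin d) (Fin d) ℂ)
        rw [Submonoid.coe_mul, StarMul.star_mul]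
        noncomm_ring
      calc (V : Matrix (Fin d) (Fin d) ℂ) * F * star (V : Matrix (Fin d) (Fin d) ℂ) = L F := rfl
        _ = ∫ U, L (f U) ∂μ := hc.symm
        _ = ∫ U, f (V * U) ∂μ := by simp only [hLf]
        _ = F := integral_mul_left_eq_self f V
    have hVV : star (V : Matrix (Fin d) (Fin d) ℂ) * V = 1 := V.2.1
    calc (V : Matrix (Fin d) (Fin d) ℂ) * F
        = ((V : Matrix (Fin d) (Fin d) ℂ) * F * star (V : Matrix (Fin d) (Fin d) ℂ)) * (V : Matrix (Fin d) (Fin d) ℂ) := by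
          rw [mul_assoc ((V : Matrix (Fin d) (Fin d) ℂ) * F), hVV, mul_one]
      _ = F * (V : Matrix (Fin d) (Fin d) ℂ) := by rw [h1]
  have htr : F.trace = B.trace := by
    have h1 : F.trace = ∫ U, (f U).trace ∂μ := ((traceCLM (Fin d)).integral_comp_comm hint).symm
    rw [h1]
    have h2 : ∀ U : Matrix.unitaryGroup (Fin d) ℂ, (f U).trace = B.trace := fun U =>
      trace_conj_eq (U : Matrix (Fin d) (Fin d) ℂ) B U.2.1
    simp only [h2]
    simp
  have hfin := eq_smul_one_of_commutes F hcomm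
  rw [htr] at hfin
  exact hfin



private lemma kron_entry_eq {R : Type} [Fintype R] [DecidableEq R] {d : ℕ}
    (ρ : Matrix (R × Fin d) (R × Fin d) ℂ) (U : Matrix (Fin d) (Fin d) ℂ)
    (r r' : R) (i j : Fin d) :
    (((1 : Matrix R R ℂ) ⊗ₖ U) * ρ * ((1 : Matrix R R ℂ) ⊗ₖ U)ᴴ) (r, i) (r', j)
      = (U * (Matrix.of fun k l => ρ (r, k) (r', l)) * star U) i j := by
  simp only [Matrix.mul_apply, Matrix.conjTranspose_apply, Matrix.kroneckerMap_apply,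
    Matrix.of_apply, Matrix.star_eq_conjTranspose, Fintype.sum_prod_type, Matrix.one_apply,
    ite_mul, mul_ite, one_mul, zero_mul, mul_zero, mul_one, star_mul', apply_ite (starRingEnd ℂ),
    star_one, star_zero, map_zero, _root_.map_one, Finset.sum_ite_eq, Finset.sum_ite_eq',
    Finset.mem_univ, if_true]
  simp only [apply_ite (star : ℂ → ℂ), star_zero, mul_ite, mul_zero, ite_mul, zero_mul,
    Finset.sum_const_zero, Finset.sum_ite_irrel, Finset.sum_ite_eq, Finset.sum_ite_eq',
    Finset.mem_univ, if_true]

end Aux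

/-- Partial trace over the second factor `A` of a matrix on `R × A`. -/
def ptraceA {R A : Type*} [Fintype A]
    (M : Matrix (R × A) (R × A) ℂ) : Matrix R R ℂ :=
  Matrix.of fun r r' => ∑ a : A, M (r, a) (r', a)

set_option maxHeartbeats 1000000 in
/-- **Haar scrambling erases correlations with the reference**: averaging
`(1_R ⊗ U) ρ (1_R ⊗ U)ᴴ` over the Haar probability measure on the unitary group
leaves `ρ_R ⊗ (1/d) 1`, the reduced state on `R` tensored with the maximally
mixed state. -/
theorem haar_scrambling_decouples
    (R : Type) [Fintype R] [DecidableEq R] [Nonempty R]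
    (d : ℕ) (hd : 1 ≤ d)
    (ρ : Matrix (R × Fin d) (R × Fin d) ℂ)
    (μ : Measure (Matrix.unitaryGroup (Fin d) ℂ))
    [μ.IsHaarMeasure] [IsProbabilityMeasure μ] :
    ∫ U : Matrix.unitaryGroup (Fin d) ℂ,
        ((1 : Matrix R R ℂ) ⊗ₖ (U : Matrix (Fin d) (Fin d) ℂ)) * ρ *
          ((1 : Matrix R R ℂ) ⊗ₖ (U : Matrix (Fin d) (Fin d) ℂ))ᴴ ∂μ
      = ptraceA ρ ⊗ₖ ((1 / (d : ℂ)) • (1 : Matrix (Fin d) (Fin d) ℂ)) := by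
  have hcontk : Continuous fun U : Matrix.unitaryGroup (Fin d) ℂ =>
      ((1 : Matrix R R ℂ) ⊗ₖ (U : Matrix (Fin d) (Fin d) ℂ)) := by
    apply continuous_matrix
    intro a b
    show Continuous fun U : Matrix.unitaryGroup (Fin d) ℂ =>
      (1 : Matrix R R ℂ) a.1 b.1 * (U : Matrix (Fin d) (Fin d) ℂ) a.2 b.2
    exact continuous_const.mul
      ((continuous_apply b.2).comp ((continuous_apply a.2).comp continuous_coe))
  have hcont : Continuous fun U : Matrix.unitaryGroup (Fin d) ℂ =>
      ((1 : Matrix R R ℂ) ⊗ₖ (U : Matrix (Fin d) (Fin d) ℂ)) * ρ *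
        ((1 : Matrix R R ℂ) ⊗ₖ (U : Matrix (Fin d) (Fin d) ℂ))ᴴ :=
    (hcontk.matrix_mul continuous_const).matrix_mul hcontk.matrix_conjTranspose
  have hint := integrable_cont (μ := μ) hcont
  ext ⟨r, i⟩ ⟨r', j⟩
  rw [integral_entry hint]
  set B : Matrix (Fin d) (Fin d) ℂ := Matrix.of fun k l => ρ (r, k) (r', l) with hB
  have hfun : ∀ U : Matrix.unitaryGroup (Fin d) ℂ,
      (((1 : Matrix R R ℂ) ⊗ₖ (U : Matrix (Fin d) (Fin d) ℂ)) * ρ *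
        ((1 : Matrix R R ℂ) ⊗ₖ (U : Matrix (Fin d) (Fin d) ℂ))ᴴ) (r, i) (r', j)
      = ((U : Matrix (Fin d) (Fin d) ℂ) * B * star (U : Matrix (Fin d) (Fin d) ℂ)) i j :=
    fun U => kron_entry_eq ρ _ r r' i j
  simp only [hfun]
  have hcont2 : Continuous fun U : Matrix.unitaryGroup (Fin d) ℂ =>
      (U : Matrix (Fin d) (Fin d) ℂ) * B * star (U : Matrix (Fin d) (Fin d) ℂ) :=
    (continuous_coe.matrix_mul continuous_const).matrix_mul
      (continuous_star.comp continuous_coe)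
  have hint2 := integrable_cont (μ := μ) hcont2
  rw [← integral_entry hint2, integral_conj_unitary μ B]
  have htrB : B.trace = ptraceA ρ r r' := by
    simp [Matrix.trace, Matrix.diag, hB, ptraceA]
  simp only [Matrix.smul_apply, Matrix.kroneckerMap_apply, Matrix.one_apply, smul_eq_mul, htrB]
  by_cases hij : i = j
  · simp only [hij, if_pos rfl, mul_one]
    ring
  · simp [hij]
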